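/- Let d ≥ 1 and let C be a real symmetric positive definite d×d matrix. Then for every M ∈ ℝ there exists ε > 0 such that every real symmetric positive definite d×d matrix x with det(x) < ε satisfies Tr(C x^{-1}) + log det(x) > M. In other words, Tr(C x^{-1}) + log det(x) → +∞ as det(x) ↓ 0 over positive definite x. -/

import Mathlib

open Matrix

lemma trace_eq_sum_eigenvalues' {d : ℕ} {A : Matrix (Fin d) (Fin d) ℝ}
    (hA : A.IsHermitian) : A.trace = ∑ i, hA.eigenvalues i := by
  conv_lhs => rw [hA.spectral_theorem, Unitary.conjStarAlgAut_apply]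
  rw [Matrix.trace_mul_cycle]
  have h1 : (star (hA.eigenvectorUnitary : Matrix (Fin d) (Fin d) ℝ)) *
      (hA.eigenvectorUnitary : Matrix (Fin d) (Fin d) ℝ) = 1 :=
    Unitary.coe_star_mul_self hA.eigenvectorUnitary
  rw [h1, one_mul, Matrix.trace_diagonal]
  simp

lemma amgm_trace {d : ℕ} {A : Matrix (Fin d) (Fin d) ℝ} (hA : A.PosSemidef)
    (hd : 1 ≤ d) : (d : ℝ) * A.det ^ ((d : ℝ)⁻¹) ≤ A.trace := by
  have hd0 : (0 : ℝ) < d := by exact_mod_cast hd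
  have hz : ∀ i ∈ Finset.univ, (0 : ℝ) ≤ hA.1.eigenvalues i :=
    fun i _ => hA.eigenvalues_nonneg i
  have key := Real.geom_mean_le_arith_mean_weighted Finset.univ
    (fun _ => (d : ℝ)⁻¹) (fun i => hA.1.eigenvalues i)
    (fun _ _ => by positivity)
    (by simp [Finset.sum_const, Finset.card_univ]; field_simp) hz
  have hprod : (∏ i, hA.1.eigenvalues i ^ ((d : ℝ)⁻¹)) =
      (∏ i, hA.1.eigenvalues i) ^ ((d : ℝ)⁻¹) :=
    (Real.finset_prod_rpow Finset.univ _ hz _)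
  have hdet : A.det = ∏ i, hA.1.eigenvalues i := by
    have := hA.1.det_eq_prod_eigenvalues
    simpa using this
  have htr : A.trace = ∑ i, hA.1.eigenvalues i := trace_eq_sum_eigenvalues' hA.1
  rw [hdet, htr, ← hprod]
  calc (d : ℝ) * ∏ i, hA.1.eigenvalues i ^ ((d : ℝ)⁻¹)
      ≤ (d : ℝ) * ∑ i, (d : ℝ)⁻¹ * hA.1.eigenvalues i :=
        mul_le_mul_of_nonneg_left key hd0.le
    _ = ∑ i, hA.1.eigenvalues i := by
        rw [← Finset.mul_sum, ← mul_assoc, mul_inv_cancel₀ hd0.ne', one_mul]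

lemma scalar_lemma (d : ℕ) (hd : 1 ≤ d) (k : ℝ) (hk : 0 < k) (M : ℝ) :
    ∃ ε > (0 : ℝ), ∀ t : ℝ, 0 < t → t < ε →
      M < (d : ℝ) * (k * t⁻¹) ^ ((d : ℝ)⁻¹) + Real.log t := by
  have hd0 : (0 : ℝ) < d := by exact_mod_cast hd
  have hdinv : (0 : ℝ) < (d : ℝ)⁻¹ := by positivity
  -- t ^ (-(d⁻¹)) → atTop as t → 0+
  have h1 : Filter.Tendsto (fun t : ℝ => t ^ (-(d : ℝ)⁻¹)) (nhdsWithin 0 (Set.Ioi 0))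
      Filter.atTop := by
    have := (tendsto_rpow_atTop hdinv).comp tendsto_inv_nhdsGT_zero
    refine this.congr' ?_
    filter_upwards [self_mem_nhdsWithin] with t ht
    have ht0 : (0 : ℝ) < t := ht
    rw [Function.comp_apply, ← Real.rpow_neg_one t, ← Real.rpow_mul ht0.le]
    norm_num
  have h2 : Filter.Tendsto (fun t : ℝ => (d : ℝ) * k ^ ((d : ℝ)⁻¹) + Real.log t * t ^ ((d : ℝ)⁻¹))
      (nhdsWithin 0 (Set.Ioi 0)) (nhds ((d : ℝ) * k ^ ((d : ℝ)⁻¹) + 0)) :=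
    tendsto_const_nhds.add (tendsto_log_mul_rpow_nhdsGT_zero hdinv)
  rw [add_zero] at h2
  have hpos : (0 : ℝ) < (d : ℝ) * k ^ ((d : ℝ)⁻¹) := by positivity
  have h3 := Filter.Tendsto.atTop_mul_pos hpos h1 h2
  have h4 : ∀ᶠ t in nhdsWithin (0 : ℝ) (Set.Ioi 0),
      M < (d : ℝ) * (k * t⁻¹) ^ ((d : ℝ)⁻¹) + Real.log t := by
    filter_upwards [h3.eventually_gt_atTop M, self_mem_nhdsWithin] with t ht htpos
    have ht0 : (0 : ℝ) < t := htpos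
    have heq : t ^ (-(d : ℝ)⁻¹) * ((d : ℝ) * k ^ ((d : ℝ)⁻¹) + Real.log t * t ^ ((d : ℝ)⁻¹))
        = (d : ℝ) * (k * t⁻¹) ^ ((d : ℝ)⁻¹) + Real.log t := by
      rw [mul_add]
      congr 1
      · rw [Real.mul_rpow hk.le (by positivity), ← Real.rpow_neg_one t,
          ← Real.rpow_mul ht0.le]
        ring_nf
      · rw [mul_comm (Real.log t), ← mul_assoc, ← Real.rpow_add ht0]
        simp
    rw [← heq]
    exact ht
  rcases mem_nhdsGT_iff_exists_Ioo_subset.mp h4 with ⟨u, hu, hsub⟩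
  exact ⟨u, hu, fun t ht0 htu => hsub ⟨ht0, htu⟩⟩

/-- for positive definite `C`, `Tr(Cx⁻¹) + log det(x) → +∞` as
`det(x) ↓ 0` over symmetric positive definite `x`: for every `M` there is `ε > 0`
such that any positive definite `x` with `det(x) < ε` satisfies
`Tr(Cx⁻¹) + log det(x) > M`. -/
theorem stmt16 (d : ℕ) (hd : 1 ≤ d) (C : Matrix (Fin d) (Fin d) ℝ) (hC : C.PosDef) :
    ∀ M : ℝ, ∃ ε > (0 : ℝ), ∀ x : Matrix (Fin d) (Fin d) ℝ, x.PosDef →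
      x.det < ε → M < (C * x⁻¹).trace + Real.log x.det := by
  intro M
  obtain ⟨ε, hε, hkey⟩ := scalar_lemma d hd C.det hC.det_pos M
  refine ⟨ε, hε, fun x hx hxdet => ?_⟩
  have ht0 : (0 : ℝ) < x.det := hx.det_pos
  -- set up the square root of x⁻¹
  have hxinv : (x⁻¹).PosDef := hx.inv
  set s := (open scoped MatrixOrder in CFC.sqrt (x⁻¹)) with hs_def
  have hs : s.PosSemidef := by
    open scoped MatrixOrder in exact (CFC.sqrt_nonneg (x⁻¹)).posSemidef
  have hss : s * s = x⁻¹ :=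
    by open scoped MatrixOrder in exact CFC.sqrt_mul_sqrt_self (x⁻¹) hxinv.posSemidef.nonneg
  have hA : (s * C * s).PosSemidef := by
    have := hC.posSemidef.conjTranspose_mul_mul_same s
    rwa [hs.1] at this
  -- trace identity
  have htr : (s * C * s).trace = (C * x⁻¹).trace := by
    rw [Matrix.trace_mul_cycle, hss, Matrix.trace_mul_comm]
  -- determinant identity
  have hdet : (s * C * s).det = C.det * (x.det)⁻¹ := by
    rw [Matrix.det_mul, Matrix.det_mul, mul_comm s.det C.det, mul_assoc, ← Matrix.det_mul, hss,
      Matrix.det_nonsing_inv, Ring.inverse_eq_inv']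
  have hamgm := amgm_trace hA hd
  rw [htr, hdet] at hamgm
  have := hkey x.det ht0 hxdet
  linarith
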